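/- For L ≥ 3, consider the periodic chain with sites indexed by ℤ/L and Hilbert space ⨂_{j∈ℤ/L} ℂ². Let N = Σ_{j∈ℤ/L} σᶻ_j σᶻ_{j+1}. Then for every j ∈ ℤ/L, the operator σˣ_j (1 − σᶻ_{j−1} σᶻ_{j+1}) commutes with N; consequently D₀ = (1/2) Σ_{j∈ℤ/L} σˣ_j (1 − σᶻ_{j−1} σᶻ_{j+1}) commutes with N. -/
import Mathlib


/-!
STATEMENT 9: On the periodic chain of L qubits (sites indexed by ℤ/L, L ≥ 3), with
N = Σ_{j∈ℤ/L} σᶻ_j σᶻ_{j+1}, every operator σˣ_j (1 − σᶻ_{j−1} σᶻ_{j+1}) commutes with N,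
and hence so does D₀ = (1/2) Σ_{j∈ℤ/L} σˣ_j (1 − σᶻ_{j−1} σᶻ_{j+1}).
-/

noncomputable section

open Matrix Complex

/-- Pauli X matrix. -/
def sigmaX : Matrix (Fin 2) (Fin 2) ℂ := !![0, 1; 1, 0]

/-- Pauli Z matrix. -/
def sigmaZ : Matrix (Fin 2) (Fin 2) ℂ := !![1, 0; 0, -1]

/-- The operator on ⨂_{k∈ℤ/L} ℂ² acting as the 2×2 matrix `A` on the j-th tensor factor
and as the identity on all the others (matrix entries of a tensor product). -/
def siteOpP (L : ℕ) [NeZero L] (j : ZMod L) (A : Matrix (Fin 2) (Fin 2) ℂ) :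
    Matrix (ZMod L → Fin 2) (ZMod L → Fin 2) ℂ :=
  fun s t => ∏ k : ZMod L, if k = j then A (s k) (t k) else (if s k = t k then 1 else 0)

/-- σˣ_j on the periodic chain. -/
def PXP (L : ℕ) [NeZero L] (j : ZMod L) : Matrix (ZMod L → Fin 2) (ZMod L → Fin 2) ℂ :=
  siteOpP L j sigmaX

/-- σᶻ_j on the periodic chain. -/
def PZP (L : ℕ) [NeZero L] (j : ZMod L) : Matrix (ZMod L → Fin 2) (ZMod L → Fin 2) ℂ :=
  siteOpP L j sigmaZ

/-- Tensor product operator given by a family of one-site matrices. -/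
def tensorOp (L : ℕ) [NeZero L] (f : ZMod L → Matrix (Fin 2) (Fin 2) ℂ) :
    Matrix (ZMod L → Fin 2) (ZMod L → Fin 2) ℂ :=
  fun s t => ∏ k : ZMod L, f k (s k) (t k)

/-- One-site Z (or identity) factor. -/
def zite {α : Type*} [DecidableEq α] (k x : α) : Matrix (Fin 2) (Fin 2) ℂ :=
  if k = x then sigmaZ else 1

lemma tensorOp_mul (L : ℕ) [NeZero L] (f g : ZMod L → Matrix (Fin 2) (Fin 2) ℂ) :
    tensorOp L f * tensorOp L g = tensorOp L (fun k => f k * g k) := by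
  ext s t
  simp only [tensorOp, Matrix.mul_apply]
  rw [Fintype.prod_sum (fun k (a : Fin 2) => f k (s k) a * g k a (t k))]
  exact Finset.sum_congr rfl fun x _ => Finset.prod_mul_distrib.symm

lemma tensorOp_comm (L : ℕ) [NeZero L] (f g : ZMod L → Matrix (Fin 2) (Fin 2) ℂ)
    (h : ∀ k, Commute (f k) (g k)) : Commute (tensorOp L f) (tensorOp L g) := by
  have he : (fun k => f k * g k) = (fun k => g k * f k) := funext fun k => (h k).eq
  show tensorOp L f * tensorOp L g = tensorOp L g * tensorOp L f
  rw [tensorOp_mul, tensorOp_mul, he]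

lemma siteOpP_eq (L : ℕ) [NeZero L] (j : ZMod L) (A : Matrix (Fin 2) (Fin 2) ℂ) :
    siteOpP L j A = tensorOp L (fun k => if k = j then A else 1) := by
  funext s t
  refine Finset.prod_congr rfl fun k _ => ?_
  by_cases h : k = j <;> simp [h, Matrix.one_apply]

lemma sigmaZ_mul_self : sigmaZ * sigmaZ = 1 := by
  rw [sigmaZ, Matrix.mul_fin_two, Matrix.one_fin_two]
  norm_num

lemma zite_comm {α : Type*} [DecidableEq α] (k a b : α) : Commute (zite k a) (zite k b) := by
  unfold zite
  split_ifs
  exacts [Commute.refl _, Commute.one_right _, Commute.one_left _, Commute.one_left _]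

lemma ziteZZ {α : Type*} [DecidableEq α] {a b c : α} (hab : a ≠ b) (hac : a ≠ c) (hbc : b ≠ c)
    (k : α) :
    (zite k a * zite k c) * (zite k b * zite k c) = zite k a * zite k b ∧
    (zite k a * zite k c) * (zite k a * zite k b) = zite k b * zite k c ∧
    (zite k b * zite k c) * (zite k a * zite k c) = zite k a * zite k b ∧
    (zite k a * zite k b) * (zite k a * zite k c) = zite k b * zite k c := by
  unfold zite
  by_cases h1 : k = a <;> by_cases h2 : k = b <;> by_cases h3 : k = c <;>
    refine ⟨?_, ?_, ?_, ?_⟩ <;>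
    simp_all [sigmaZ_mul_self]

theorem statement_9 (L : ℕ) [NeZero L] (hL : 3 ≤ L)
    (N : Matrix (ZMod L → Fin 2) (ZMod L → Fin 2) ℂ)
    (hN : N = ∑ j : ZMod L, PZP L j * PZP L (j + 1)) :
    (∀ j : ZMod L, Commute (PXP L j * (1 - PZP L (j - 1) * PZP L (j + 1))) N) ∧
    Commute ((2 : ℂ)⁻¹ • ∑ j : ZMod L, PXP L j * (1 - PZP L (j - 1) * PZP L (j + 1))) N := by
  have h1 : (1 : ZMod L) ≠ 0 := by
    intro h
    have hdvd : L ∣ 1 := (ZMod.natCast_eq_zero_iff 1 L).mp (by exact_mod_cast h)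
    have := Nat.le_of_dvd one_pos hdvd
    omega
  have h2 : (2 : ZMod L) ≠ 0 := by
    intro h
    have hdvd : L ∣ 2 := (ZMod.natCast_eq_zero_iff 2 L).mp (by exact_mod_cast h)
    have := Nat.le_of_dvd two_pos hdvd
    omega
  -- the family of two-site ZZ operators
  have hHi : ∀ i : ZMod L,
      PZP L i * PZP L (i + 1) = tensorOp L (fun k => zite k i * zite k (i + 1)) := by
    intro i
    rw [PZP, PZP, siteOpP_eq, siteOpP_eq, tensorOp_mul]
    rfl
  have key : ∀ j : ZMod L, Commute (PXP L j * (1 - PZP L (j - 1) * PZP L (j + 1))) N := by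
    intro j
    -- distinctness of sites j-1, j, j+1
    have d1 : j ≠ j + 1 := fun h => h1 (left_eq_add.mp h)
    have d2 : j - 1 ≠ j := fun h => h1 (by rwa [sub_eq_self] at h)
    have d3 : j - 1 ≠ j + 1 := fun h => h2 (by linear_combination -h)
    have e1 : j - 1 + 1 = j := by ring
    set wf : ZMod L → ZMod L → Matrix (Fin 2) (Fin 2) ℂ :=
      fun i k => zite k i * zite k (i + 1) with hwf
    set u : ZMod L → Matrix (Fin 2) (Fin 2) ℂ := fun k => if k = j then sigmaX else 1 with hu
    set p : ZMod L → Matrix (Fin 2) (Fin 2) ℂ :=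
      fun k => zite k (j - 1) * zite k (j + 1) with hp
    have hPX : PXP L j = tensorOp L u := by rw [PXP, siteOpP_eq]
    have hP : PZP L (j - 1) * PZP L (j + 1) = tensorOp L p := by
      rw [PZP, PZP, siteOpP_eq, siteOpP_eq, tensorOp_mul]
      rfl
    set A := tensorOp L u with hA
    set P := tensorOp L p with hPdef
    set B : Matrix (ZMod L → Fin 2) (ZMod L → Fin 2) ℂ :=
      tensorOp L (wf j) + tensorOp L (wf (j - 1)) with hB
    -- A commutes with P
    have hAP : Commute A P := by
      apply tensorOp_comm
      intro k
      by_cases hk : k = j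
      · have hka : k ≠ j - 1 := by rw [hk]; exact Ne.symm d2
        have hkc : k ≠ j + 1 := by rw [hk]; exact d1
        have hpk : p k = 1 := by
          show zite k (j - 1) * zite k (j + 1) = 1
          unfold zite
          rw [if_neg hka, if_neg hkc, one_mul]
        rw [hpk]; exact Commute.one_right _
      · have huk : u k = 1 := by
          show (if k = j then sigmaX else 1) = 1
          rw [if_neg hk]
        rw [huk]; exact Commute.one_left _
    -- the key pointwise identities
    have PB1 : (fun k => p k * wf j k) = wf (j - 1) := by
      funext k
      show (zite k (j - 1) * zite k (j + 1)) * (zite k j * zite k (j + 1)) =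
        zite k (j - 1) * zite k (j - 1 + 1)
      rw [e1]
      exact (ziteZZ d2 d3 d1 k).1
    have PB2 : (fun k => p k * wf (j - 1) k) = wf j := by
      funext k
      show (zite k (j - 1) * zite k (j + 1)) * (zite k (j - 1) * zite k (j - 1 + 1)) =
        zite k j * zite k (j + 1)
      rw [e1]
      exact (ziteZZ d2 d3 d1 k).2.1
    have BP1 : (fun k => wf j k * p k) = wf (j - 1) := by
      funext k
      show (zite k j * zite k (j + 1)) * (zite k (j - 1) * zite k (j + 1)) =
        zite k (j - 1) * zite k (j - 1 + 1)
      rw [e1]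
      exact (ziteZZ d2 d3 d1 k).2.2.1
    have BP2 : (fun k => wf (j - 1) k * p k) = wf j := by
      funext k
      show (zite k (j - 1) * zite k (j - 1 + 1)) * (zite k (j - 1) * zite k (j + 1)) =
        zite k j * zite k (j + 1)
      rw [e1]
      exact (ziteZZ d2 d3 d1 k).2.2.2
    have hPB : P * B = B := by
      rw [hB, mul_add, hPdef, tensorOp_mul, tensorOp_mul, PB1, PB2, add_comm]
    have hBP : B * P = B := by
      rw [hB, add_mul, hPdef, tensorOp_mul, tensorOp_mul, BP1, BP2, add_comm]
    -- commutation with the remaining terms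
    have key2 : ∀ i ∈ (Finset.univ.erase j).erase (j - 1),
        Commute (A * (1 - P)) (tensorOp L (wf i)) := by
      intro i hi
      have hi1 : i ≠ j - 1 := (Finset.mem_erase.mp hi).1
      have hi2 : i ≠ j := (Finset.mem_erase.mp ((Finset.mem_erase.mp hi).2)).1
      have hji1 : j ≠ i + 1 := fun h => hi1 (by rw [h]; ring)
      have hiu : Commute A (tensorOp L (wf i)) := by
        apply tensorOp_comm
        intro k
        by_cases hk : k = j
        · have hka : k ≠ i := by rw [hk]; exact Ne.symm hi2
          have hkc : k ≠ i + 1 := by rw [hk]; exact hji1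
          have hwk : wf i k = 1 := by
            show zite k i * zite k (i + 1) = 1
            unfold zite
            rw [if_neg hka, if_neg hkc, one_mul]
          rw [hwk]; exact Commute.one_right _
        · have huk : u k = 1 := by
            show (if k = j then sigmaX else 1) = 1
            rw [if_neg hk]
          rw [huk]; exact Commute.one_left _
      have hip : Commute P (tensorOp L (wf i)) := by
        apply tensorOp_comm
        intro k
        exact Commute.mul_left
          (Commute.mul_right (zite_comm k _ _) (zite_comm k _ _))
          (Commute.mul_right (zite_comm k _ _) (zite_comm k _ _))
      exact hiu.mul_left (Commute.sub_left (Commute.one_left _) hip)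
    -- decompose N
    have hmem2 : j - 1 ∈ Finset.univ.erase j := Finset.mem_erase.mpr ⟨d2, Finset.mem_univ _⟩
    have hsum : N = B + ∑ i ∈ (Finset.univ.erase j).erase (j - 1), tensorOp L (wf i) := by
      rw [hN, Finset.sum_congr rfl (fun i _ => hHi i),
        ← Finset.add_sum_erase _ _ (Finset.mem_univ j),
        ← Finset.add_sum_erase _ _ hmem2, hB, add_assoc]
    have hDB : A * (1 - P) * B = 0 := by
      rw [mul_assoc, sub_mul, one_mul, hPB, sub_self, mul_zero]
    have hBAP : B * A * P = B * A := by
      rw [mul_assoc, hAP.eq, ← mul_assoc, hBP]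
    have hBD : B * (A * (1 - P)) = 0 := by
      rw [← mul_assoc, mul_sub, mul_one, hBAP, sub_self]
    have hDBcomm : Commute (A * (1 - P)) B := by
      show A * (1 - P) * B = B * (A * (1 - P))
      rw [hDB, hBD]
    rw [hPX, hP, hsum]
    exact hDBcomm.add_right (Commute.sum_right _ _ _ key2)
  refine ⟨key, ?_⟩
  exact Commute.smul_left (Commute.sum_left _ _ _ (fun j _ => key j)) _

end
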